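/- Existence and uniqueness of the lowest stable ancestor: let V be a finite type, adj an acyclic relation on V, ρ a root (every vertex is reachable from ρ), and A a nonempty set of vertices. Then there exists a unique vertex v such that v is stable for A (relative to ρ) and every vertex that is stable for A is an ancestor of v. -/
import Mathlib


/-- `v` is stable for `a` relative to root `ρ`: either `ρ = v`, or `a` is not
reachable from `ρ` when all arcs entering `v` are forbidden (i.e. every directed
path from `ρ` to `a` passes through `v`). -/
def Stable {V : Type*} (adj : V → V → Prop) (ρ v a : V) : Prop :=
  ρ = v ∨ ¬ Relation.ReflTransGen (fun x y => adj x y ∧ y ≠ v) ρ a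

/-- Split lemma: any path from `x` to `a` either avoids `v` (after `x`) entirely,
or `v` occurs on it, so that `v` reaches `a`. -/
lemma split_suffix {V : Type*} (adj : V → V → Prop) (v : V) :
    ∀ {x a : V}, Relation.ReflTransGen adj x a →
      Relation.ReflTransGen (fun p q => adj p q ∧ q ≠ v) x a ∨
        Relation.ReflTransGen adj v a := by
  intro x a h
  induction h using Relation.ReflTransGen.head_induction_on with
  | refl => exact Or.inl Relation.ReflTransGen.refl
  | head hxy hya ih =>
    rename_i x' y'
    by_cases hy : y' = v
    · subst hy; exact Or.inr hya
    · rcases ih with h1 | h2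
      · exact Or.inl (Relation.ReflTransGen.head ⟨hxy, hy⟩ h1)
      · exact Or.inr h2

/-- Split lemma: any path from `x` to `a` either avoids `v` (after `x`) entirely,
or `x` reaches `v`. -/
lemma split_prefix {V : Type*} (adj : V → V → Prop) (v : V) :
    ∀ {x a : V}, Relation.ReflTransGen adj x a →
      Relation.ReflTransGen (fun p q => adj p q ∧ q ≠ v) x a ∨
        Relation.ReflTransGen adj x v := by
  intro x a h
  induction h using Relation.ReflTransGen.head_induction_on with
  | refl => exact Or.inl Relation.ReflTransGen.refl
  | head hxy hya ih =>
    rename_i x' y'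
    by_cases hy : y' = v
    · subst hy; exact Or.inr (Relation.ReflTransGen.single hxy)
    · rcases ih with h1 | h2
      · exact Or.inl (Relation.ReflTransGen.head ⟨hxy, hy⟩ h1)
      · exact Or.inr (Relation.ReflTransGen.head hxy h2)

/-- A vertex stable for `a` reaches `a`. -/
lemma stable_reaches {V : Type*} {adj : V → V → Prop} {ρ v a : V}
    (hroot : Relation.ReflTransGen adj ρ a) (hs : Stable adj ρ v a) :
    Relation.ReflTransGen adj v a := by
  rcases hs with rfl | hs
  · exact hroot
  · rcases split_suffix adj v hroot with h | h
    · exact absurd h hs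
    · exact h

/-- Two vertices stable for the same `a` are comparable. -/
lemma stable_comparable {V : Type*} {adj : V → V → Prop} {ρ v w a : V}
    (hroot : ∀ x, Relation.ReflTransGen adj ρ x)
    (hv : Stable adj ρ v a) (hw : Stable adj ρ w a) :
    Relation.ReflTransGen adj v w ∨ Relation.ReflTransGen adj w v := by
  rcases hv with rfl | hv'
  · exact Or.inl (hroot w)
  rcases hw with rfl | hw'
  · exact Or.inr (hroot v)
  have hva : Relation.ReflTransGen adj v a := by
    rcases split_suffix adj v (hroot a) with h | h
    · exact absurd h hv'
    · exact h
  rcases split_prefix adj w hva with h1 | h1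
  · -- path from v to a avoiding w; so every path ρ → v must hit w
    rcases split_suffix adj w (hroot v) with h2 | h2
    · exact absurd (h2.trans h1) hw'
    · exact Or.inr h2
  · exact Or.inl h1

/-- Existence and uniqueness of the lowest stable ancestor: in a finite acyclic
rooted digraph, every nonempty set `A` of vertices has a unique vertex `v` that
is stable for `A` and is a descendant of every vertex that is stable for `A`. -/
theorem lsa_existsUnique {V : Type*} [Fintype V] (adj : V → V → Prop)
    (hacyc : ∀ x, ¬ Relation.TransGen adj x x)
    (ρ : V) (hroot : ∀ v, Relation.ReflTransGen adj ρ v)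
    (A : Set V) (hA : A.Nonempty) :
    ∃! v : V, (∀ a ∈ A, Stable adj ρ v a) ∧
      ∀ w : V, (∀ a ∈ A, Stable adj ρ w a) → Relation.ReflTransGen adj w v := by
  classical
  obtain ⟨a₀, ha₀⟩ := hA
  set S : Set V := {v | ∀ a ∈ A, Stable adj ρ v a} with hS
  have hρS : ρ ∈ S := fun a _ => Or.inl rfl
  -- antisymmetry of reachability in an acyclic digraph
  have antisymm : ∀ {x y : V}, Relation.ReflTransGen adj x y →
      Relation.ReflTransGen adj y x → x = y := by
    intro x y hxy hyx
    rcases Relation.reflTransGen_iff_eq_or_transGen.mp hxy with rfl | ht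
    · rfl
    · exact absurd (Relation.TransGen.trans_right hyx ht) (hacyc y)
  -- a maximal element of S w.r.t. reachability
  have : IsTrans V (fun x y => Relation.TransGen adj y x) :=
    ⟨fun _ _ _ h1 h2 => h2.trans h1⟩
  have : IsIrrefl V (fun x y => Relation.TransGen adj y x) := ⟨fun x => hacyc x⟩
  obtain ⟨v, hvS, hvmax⟩ :=
    (Finite.wellFounded_of_trans_of_irrefl
      (fun x y => Relation.TransGen adj y x)).has_min S ⟨ρ, hρS⟩
  have hdesc : ∀ w : V, (∀ a ∈ A, Stable adj ρ w a) → Relation.ReflTransGen adj w v := by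
    intro w hwS
    rcases stable_comparable hroot (hvS a₀ ha₀) (hwS a₀ ha₀) with h | h
    · rcases Relation.reflTransGen_iff_eq_or_transGen.mp h with rfl | ht
      · exact Relation.ReflTransGen.refl
      · exact absurd ht (hvmax w hwS)
    · exact h
  refine ⟨v, ⟨hvS, hdesc⟩, ?_⟩
  rintro w ⟨hwS, hwmax⟩
  exact antisymm (hdesc w hwS) (hwmax v hvS)
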